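/- (Quasi-optimality of the ideal DPG method in the trial norm.) Suppose b satisfies the inf-sup condition with constant γ > 0, let U_h ⊆ U be a finite-dimensional subspace, and let V^opt = T(U_h). Let l : V → ℂ be a bounded antilinear functional, let u ∈ U satisfy b(u, v) = l(v) for all v ∈ V, and let u_h ∈ U_h satisfy b(u_h, v_h) = l(v_h) for all v_h ∈ V^opt. Then ‖u − u_h‖_U ≤ (M/γ) · inf_{w_h ∈ U_h} ‖u − w_h‖_U. -/

import Mathlib

/-- (Quasi-optimality of the ideal DPG method in the trial norm.)
Suppose `b` satisfies the inf-sup condition with constant `γ > 0`, let `U_h ⊆ U` be a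
finite-dimensional subspace and `V^opt = T(U_h)` its optimal test space, where `T` is the
trial-to-test operator defined by `(Tu, v)_V = b(u, v)` for all `v ∈ V`. If `u ∈ U` solves
`b(u, v) = l(v)` for all `v ∈ V` and `u_h ∈ U_h` solves `b(u_h, v_h) = l(v_h)` for all
`v_h ∈ V^opt`, then `‖u − u_h‖_U ≤ (M/γ) · inf_{w_h ∈ U_h} ‖u − w_h‖_U`. -/
theorem ideal_dpg_quasi_optimality
    {U V : Type*}
    [NormedAddCommGroup U] [InnerProductSpace ℂ U] [CompleteSpace U]
    [NormedAddCommGroup V] [InnerProductSpace ℂ V] [CompleteSpace V]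
    (b : U →ₗ[ℂ] V →ₗ⋆[ℂ] ℂ)
    (M : ℝ) (hM : 0 < M)
    (hb : ∀ (u : U) (v : V), ‖b u v‖ ≤ M * ‖u‖ * ‖v‖)
    (T : U →ₗ[ℂ] V) (hT : ∀ (u : U) (v : V), (inner ℂ v (T u) : ℂ) = b u v)
    (γ : ℝ) (hγ : 0 < γ)
    (hinfsup : ∀ u : U, γ * ‖u‖ ≤ ⨆ v : {v : V // v ≠ 0}, ‖b u (v : V)‖ / ‖(v : V)‖)
    (Uh : Submodule ℂ U) [FiniteDimensional ℂ Uh]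
    (l : V →L⋆[ℂ] ℂ)
    (u : U) (hu : ∀ v : V, b u v = l v)
    (uh : U) (huh : uh ∈ Uh)
    (huheq : ∀ v ∈ Submodule.map T Uh, b uh v = l v) :
    ‖u - uh‖ ≤ (M / γ) * ⨅ w : Uh, ‖u - (w : U)‖ := by
  -- key fact 1: γ‖z‖ ≤ ‖T z‖
  have hTnorm : ∀ z : U, γ * ‖z‖ ≤ ‖T z‖ := by
    intro z
    refine (hinfsup z).trans (Real.iSup_le ?_ (norm_nonneg _))
    rintro ⟨v, hv⟩
    rw [div_le_iff₀ (norm_pos_iff.mpr hv)]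
    calc ‖b z v‖ = ‖(inner ℂ v (T z) : ℂ)‖ := by rw [hT]
      _ ≤ ‖v‖ * ‖T z‖ := norm_inner_le_norm v (T z)
      _ = ‖T z‖ * ‖v‖ := mul_comm _ _
  -- Galerkin orthogonality
  have horth : ∀ z ∈ Uh, (inner ℂ (T z) (T (u - uh)) : ℂ) = 0 := by
    intro z hz
    have h1 : b u (T z) = l (T z) := hu (T z)
    have h2 : b uh (T z) = l (T z) := huheq (T z) ⟨z, hz, rfl⟩
    rw [hT]
    simp only [map_sub, LinearMap.sub_apply, h1, h2, sub_self]
  set e := u - uh with he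
  -- key estimate: for every w ∈ Uh, γ‖e‖ ≤ M‖u - w‖
  have hkey : ∀ w : U, w ∈ Uh → γ * ‖e‖ ≤ M * ‖u - w‖ := by
    intro w hw
    have hTe : ‖T e‖ ≤ M * ‖u - w‖ := by
      have hd : u - w = e + (uh - w) := by rw [he]; abel
      have ho : (inner ℂ (T e) (T (uh - w)) : ℂ) = 0 := by
        have := horth (uh - w) (Submodule.sub_mem Uh huh hw)
        rw [← inner_conj_symm, this, map_zero]
      have hinner : (inner ℂ (T e) (T (u - w)) : ℂ) = (‖T e‖ : ℂ) ^ 2 := by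
        rw [hd, map_add, inner_add_right, ho, add_zero, inner_self_eq_norm_sq_to_K]; norm_cast
      have heq : (‖T e‖ : ℝ) ^ 2 = ‖b (u - w) (T e)‖ := by
        rw [← hT, hinner]
        simp [abs_of_nonneg (norm_nonneg (T e))]
      have hle : (‖T e‖ : ℝ) ^ 2 ≤ M * ‖u - w‖ * ‖T e‖ := heq ▸ hb (u - w) (T e)
      rcases eq_or_lt_of_le (norm_nonneg (T e)) with h0 | h0
      · rw [← h0]; positivity
      · nlinarith
    exact (hTnorm e).trans hTe
  -- conclude
  have hinf : γ * ‖e‖ / M ≤ ⨅ w : Uh, ‖u - (w : U)‖ := by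
    refine le_ciInf fun w => ?_
    rw [div_le_iff₀ hM, mul_comm _ M]
    exact hkey w w.2
  calc ‖e‖ = (M / γ) * (γ * ‖e‖ / M) := by field_simp
    _ ≤ (M / γ) * ⨅ w : Uh, ‖u - (w : U)‖ :=
      mul_le_mul_of_nonneg_left hinf (by positivity)
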